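/- The 4-dimensional algebra over ℂ with basis e₁,e₂,e₃,e₄ and nonzero products e₁e₁ = e₂, e₁e₂ = e₄, e₂e₁ = e₃ (all other basis products zero) is a terminal algebra but is not a left Leibniz algebra. -/
import Mathlib

def kbr1 {V : Type*} [AddCommGroup V] (A : V → V) (B : V → V → V) : V → V → V :=
  fun x y => A (B x y) - B (A x) y - B x (A y)

def kbr2 {V : Type*} [AddCommGroup V] (B C : V → V → V) : V → V → V → V :=
  fun x y z => B (C x y) z + B x (C y z) + B y (C x z)
    - C (B x y) z - C x (B y z) - C y (B x z)

def IsTerminal {V : Type*} [AddCommGroup V] (P : V → V → V) : Prop :=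
  ∀ a x y z, kbr2 (kbr1 (fun w => P a w) P) P x y z = 0

def LeftLeibniz {V : Type*} [AddCommGroup V] (P : V → V → V) : Prop :=
  ∀ a x y, P a (P x y) = P (P a x) y + P x (P a y)

/-- The algebra T⁴₀₂ with basis `e₁,e₂,e₃,e₄` and nonzero products
`e₁e₁ = e₂`, `e₁e₂ = e₄`, `e₂e₁ = e₃` (here `eᵢ = Pi.single (i-1) 1`). -/
def mulT402 (x y : Fin 4 → ℂ) : Fin 4 → ℂ :=
  (x 0 * y 0) • (Pi.single 1 1 : Fin 4 → ℂ) + (x 0 * y 1) • (Pi.single 3 1 : Fin 4 → ℂ) + (x 1 * y 0) • (Pi.single 2 1 : Fin 4 → ℂ)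

/-- T⁴₀₂ is terminal but not left Leibniz. -/
theorem stmt9 : IsTerminal mulT402 ∧ ¬ LeftLeibniz mulT402 := by
  constructor
  · intro a x y z
    funext i
    simp only [kbr1, kbr2, mulT402, Pi.add_apply, Pi.sub_apply, Pi.smul_apply,
      smul_eq_mul, Pi.zero_apply]
    fin_cases i <;> simp [Pi.single_apply]
  · intro h
    have := congrFun (h (Pi.single 0 1) (Pi.single 0 1) (Pi.single 0 1)) 2
    simp [mulT402, Pi.single_apply] at this
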